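/- Let C be a positive integer. For every real C×C special orthogonal matrix Q (i.e., Qᵀ·Q = 1 and det Q = 1), there exists a skew-symmetric real C×C matrix A (Aᵀ = −A) with exp(A) = Q. -/

import Mathlib

open Matrix NormedSpace Nat



noncomputable def sincc (x : ℝ) : ℝ := if x = 0 then 1 else Real.sin x / x

lemma hasSum_sincc (x : ℝ) :
    HasSum (fun k : ℕ => (-1 : ℝ) ^ k * x ^ (2 * k) / ((2 * k + 1)! : ℝ)) (sincc x) := by
  rcases eq_or_ne x 0 with rfl | hx
  · unfold sincc
    simp only [if_pos rfl]
    have hf : (fun k : ℕ => (-1 : ℝ) ^ k * (0:ℝ) ^ (2 * k) / ((2 * k + 1)! : ℝ))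
        = fun k : ℕ => if k = 0 then (1:ℝ) else 0 := by
      funext k
      rcases Nat.eq_zero_or_pos k with rfl | hk
      · norm_num
      · have : 2 * k ≠ 0 := by omega
        simp [zero_pow this, hk.ne.symm]
    rw [hf]
    exact hasSum_ite_eq 0 1
  · unfold sincc
    rw [if_neg hx]
    have h := (Real.hasSum_sin x).div_const x
    convert h using 2 with k
    case e'_3 => rfl
    field_simp [pow_succ]
    ring

section ExpLemma

variable {n : Type*} [Fintype n] [DecidableEq n]

lemma hasSum_matrix {f : ℕ → Matrix n n ℝ} {g : Matrix n n ℝ}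
    (h : ∀ i j, HasSum (fun k => f k i j) (g i j)) : HasSum f g :=
  Pi.hasSum.mpr fun i => Pi.hasSum.mpr fun j => h i j

lemma exp_of_sq (B : Matrix n n ℝ) (θ : n → ℝ)
    (hsq : B * B = -(diagonal fun i => θ i ^ 2)) :
    NormedSpace.exp B
      = diagonal (fun i => Real.cos (θ i)) + diagonal (fun i => sincc (θ i)) * B := by
  have hpow : ∀ k : ℕ, B ^ (2 * k) = diagonal fun i => (-1 : ℝ) ^ k * θ i ^ (2 * k) := by
    intro k
    induction k with
    | zero => simp
    | succ k ih =>
      have h2 : 2 * (k + 1) = 2 * k + 2 := by ring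
      rw [h2, pow_add, ih, sq, hsq, mul_neg, diagonal_mul_diagonal]
      ext i j
      rcases eq_or_ne i j with rfl | hij
      · simp only [Matrix.neg_apply, diagonal_apply_eq]
        ring
      · simp [diagonal_apply_ne _ hij]
  rw [NormedSpace.exp_eq_tsum (𝕂 := ℝ)]
  refine HasSum.tsum_eq ?_
  refine HasSum.even_add_odd ?_ ?_
  · refine hasSum_matrix fun i j => ?_
    have he : ∀ k : ℕ, ((((2 * k)! : ℝ))⁻¹ • B ^ (2 * k)) i j
        = (if i = j then ((-1 : ℝ) ^ k * θ i ^ (2 * k) / ((2 * k)! : ℝ)) else 0) := by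
      intro k
      rw [hpow k]
      simp only [Matrix.smul_apply, diagonal_apply, smul_eq_mul]
      split
      · ring
      · simp
    simp_rw [he]
    rcases eq_or_ne i j with rfl | hij
    · simp only [if_pos rfl, diagonal_apply_eq]
      exact_mod_cast Real.hasSum_cos (θ i)
    · simp only [if_neg hij, diagonal_apply_ne _ hij]
      exact hasSum_zero
  · refine hasSum_matrix fun i j => ?_
    have ho : ∀ k : ℕ, ((((2 * k + 1)! : ℝ))⁻¹ • B ^ (2 * k + 1)) i j
        = ((-1 : ℝ) ^ k * θ i ^ (2 * k) / ((2 * k + 1)! : ℝ)) * B i j := by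
      intro k
      rw [pow_succ, hpow k]
      simp only [Matrix.smul_apply, smul_eq_mul, Matrix.mul_apply, diagonal_apply]
      rw [Finset.mul_sum, Finset.sum_eq_single i]
      · simp only [if_pos rfl, ite_true]
        ring
      · intro b _ hb
        simp [Ne.symm hb]
      · intro h; exact absurd (Finset.mem_univ i) h
    simp_rw [ho]
    have : (diagonal (fun i => sincc (θ i)) * B) i j = sincc (θ i) * B i j := by
      rw [diagonal_mul]
    rw [this]
    exact (hasSum_sincc (θ i)).mul_right (B i j)

end ExpLemma


lemma exists_complex_structure {C : ℕ} (S : Finset (Fin C)) (hS : Even S.card) :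
    ∃ J : Matrix (Fin C) (Fin C) ℝ, Jᵀ = -J ∧
      (∀ a b, a ∉ S ∨ b ∉ S → J a b = 0) ∧
      J * J = -diagonal (fun i => if i ∈ S then (1:ℝ) else 0) := by
  classical
  obtain ⟨m, hm⟩ := hS
  have hm2 : S.card = 2 * m := by omega
  let ν : Matrix (Fin 2) (Fin 2) ℝ := !![0, -1; 1, 0]
  have hν : ν * ν = -1 := by
    ext i j
    fin_cases i <;> fin_cases j <;>
      simp [ν, Matrix.mul_apply, Fin.sum_univ_two, Matrix.one_apply]
  have hνt : νᵀ = -ν := by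
    ext i j
    fin_cases i <;> fin_cases j <;> simp [ν]
  let j0 : Matrix (Fin 2 × Fin m) (Fin 2 × Fin m) ℝ := blockDiagonal (fun _ => ν)
  have hj0sq : j0 * j0 = -1 := by
    simp only [j0, ← blockDiagonal_mul, hν]
    rw [show (fun _ : Fin m => (-1 : Matrix (Fin 2) (Fin 2) ℝ)) = -1 from rfl,
      blockDiagonal_neg, blockDiagonal_one]
  have hj0t : j0ᵀ = -j0 := by
    simp only [j0, blockDiagonal_transpose, hνt]
    rw [show (fun _ : Fin m => (-ν : Matrix (Fin 2) (Fin 2) ℝ)) = -(fun _ => ν) from rfl,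
      blockDiagonal_neg]
  let τ : {x // x ∈ S} ≃ Fin 2 × Fin m :=
    S.equivFin.trans ((finCongr hm2).trans
      ((finProdFinEquiv (m := 2) (n := m)).symm))
  let J : Matrix (Fin C) (Fin C) ℝ := fun a b =>
    if ha : a ∈ S then (if hb : b ∈ S then j0 (τ ⟨a, ha⟩) (τ ⟨b, hb⟩) else 0) else 0
  have hsupp : ∀ a b, a ∉ S ∨ b ∉ S → J a b = 0 := by
    intro a b hab
    rcases hab with h | h <;> simp [J, h]
  refine ⟨J, ?_, hsupp, ?_⟩
  · ext a b
    by_cases ha : a ∈ S <;> by_cases hb : b ∈ S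
    · have := congrFun (congrFun hj0t (τ ⟨a, ha⟩)) (τ ⟨b, hb⟩)
      simp only [transpose_apply, Matrix.neg_apply] at this ⊢
      simp only [J, dif_pos ha, dif_pos hb]
      exact this
    all_goals (rw [transpose_apply, Matrix.neg_apply]; simp [transpose_apply, hsupp a b, hsupp b a, ha, hb, J])
  · ext a b
    rw [Matrix.mul_apply]
    by_cases ha : a ∈ S
    · by_cases hb : b ∈ S
      · have key : ∑ c, J a c * J c b = ∑ c ∈ S, J a c * J c b := by
          refine (Finset.sum_subset S.subset_univ ?_).symm
          intro c _ hc
          rw [hsupp a c (Or.inr hc), zero_mul]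
        rw [key]
        rw [← Finset.sum_attach S (fun c => J a c * J c b)]
        have : ∀ (c : {x // x ∈ S}), J a c * J c b
            = j0 (τ ⟨a, ha⟩) (τ c) * j0 (τ c) (τ ⟨b, hb⟩) := by
          intro c
          simp only [J, dif_pos ha, dif_pos hb, dif_pos c.2]
        rw [Finset.sum_congr rfl (fun c _ => this c)]
        have := congrFun (congrFun hj0sq (τ ⟨a, ha⟩)) (τ ⟨b, hb⟩)
        rw [Matrix.mul_apply] at this
        rw [← Finset.univ_eq_attach]
        rw [Fintype.sum_equiv τ _ (fun p => j0 (τ ⟨a, ha⟩) p * j0 p (τ ⟨b, hb⟩))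
          (fun c => rfl), this]
        have htau : (τ ⟨a, ha⟩ = τ ⟨b, hb⟩) ↔ a = b := by
          rw [Equiv.apply_eq_iff_eq, Subtype.mk_eq_mk]
        simp only [Matrix.neg_apply, Matrix.one_apply, diagonal_apply]
        by_cases hab : a = b
        · subst hab
          simp [htau.mpr rfl, ha]
        · rw [if_neg (fun h => hab (htau.mp h)), if_neg hab]
      · have h0 : ∀ c, J a c * J c b = 0 := fun c => by rw [hsupp c b (Or.inr hb), mul_zero]
        rw [Finset.sum_congr rfl (fun c _ => h0 c), Finset.sum_const_zero]
        by_cases hab : a = b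
        · exact absurd (hab ▸ ha) hb
        · simp [diagonal_apply_ne _ hab]
    · have h0 : ∀ c, J a c * J c b = 0 := fun c => by rw [hsupp a c (Or.inl ha), zero_mul]
      rw [Finset.sum_congr rfl (fun c _ => h0 c), Finset.sum_const_zero]
      by_cases hab : a = b
      · subst hab; simp [ha]
      · simp [diagonal_apply_ne _ hab]


lemma skew_dot {n : Type*} [Fintype n] (W : Matrix n n ℝ) (hW : Wᵀ = -W) (v : n → ℝ) :
    v ⬝ᵥ (W *ᵥ v) = 0 := by
  have h : v ⬝ᵥ (W *ᵥ v) = -(v ⬝ᵥ (W *ᵥ v)) := by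
    calc v ⬝ᵥ (W *ᵥ v) = (v ᵥ* W) ⬝ᵥ v := dotProduct_mulVec v W v
    _ = (Wᵀ *ᵥ v) ⬝ᵥ v := by rw [Matrix.mulVec_transpose]
    _ = (-W *ᵥ v) ⬝ᵥ v := by rw [hW]
    _ = -((W *ᵥ v) ⬝ᵥ v) := by rw [Matrix.neg_mulVec, neg_dotProduct]
    _ = -(v ⬝ᵥ (W *ᵥ v)) := by rw [dotProduct_comm]
  linarith

lemma even_card_neg_one {C : ℕ} (R K' : Matrix (Fin C) (Fin C) ℝ) (μ : Fin C → ℝ)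
    (hR : R = diagonal μ + K') (hKt : K'ᵀ = -K') (hRtR : Rᵀ * R = 1) (hdet : R.det = 1)
    (hmu : ∀ i, -1 ≤ μ i) (hrow : ∀ a, μ a = -1 → ∀ b, K' a b = 0) :
    Even (Finset.univ.filter (fun i => μ i = -1)).card := by
  classical
  set S := Finset.univ.filter (fun i => μ i = -1) with hSdef
  have hmem : ∀ i, i ∈ S ↔ μ i = -1 := by
    intro i; simp [hSdef]
  have hcol : ∀ b, μ b = -1 → ∀ a, K' a b = 0 := by
    intro b hb a
    have h1 : K' b a = 0 := hrow b hb a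
    have h2 := congrFun (congrFun hKt b) a
    simp only [transpose_apply, Matrix.neg_apply] at h2
    -- h2 : K' a b = -K' b a
    rw [h1] at h2
    simpa using h2
  have hRrow : ∀ a, μ a = -1 → ∀ b, R a b = if a = b then (-1:ℝ) else 0 := by
    intro a ha b
    rw [hR]
    simp only [Matrix.add_apply, diagonal_apply, hrow a ha b, add_zero]
    split
    · exact ha
    · rfl
  have hRcol : ∀ b, μ b = -1 → ∀ a, R a b = if a = b then (-1:ℝ) else 0 := by
    intro b hb a
    rw [hR]
    simp only [Matrix.add_apply, diagonal_apply, hcol b hb a, add_zero]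
    split
    · next h => rw [h]; exact hb
    · rfl
  let e := Equiv.sumCompl (fun x : Fin C => x ∈ S)
  let cf : {x : Fin C // x ∉ S} → Fin C := fun p => ↑p
  have hcf : Function.Injective cf := Subtype.coe_injective
  let R₀ := R.submatrix cf cf
  have hblock : R.submatrix e e = fromBlocks (-1) 0 0 R₀ := by
    ext p q
    rcases p with p | p <;> rcases q with q | q <;>
      simp only [e, submatrix_apply, Equiv.sumCompl_apply_inl, Equiv.sumCompl_apply_inr,
        fromBlocks_apply₁₁, fromBlocks_apply₁₂, fromBlocks_apply₂₁, fromBlocks_apply₂₂]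
    · rw [hRrow p ((hmem p).mp p.2) q]
      simp only [Matrix.neg_apply, Matrix.one_apply, Subtype.coe_inj]
      split <;> simp_all
    · rw [hRrow p ((hmem p).mp p.2) q]
      rw [if_neg]
      · rfl
      · intro h; exact q.2 (h ▸ p.2)
    · rw [hRcol q ((hmem q).mp q.2) p]
      rw [if_neg]
      · rfl
      · intro h; exact p.2 (h ▸ q.2)
    · rfl
  have hdet2 : (1:ℝ) = (-1 : ℝ) ^ S.card * R₀.det := by
    calc (1:ℝ) = R.det := hdet.symm
    _ = (R.submatrix e e).det := (det_submatrix_equiv_self e R).symm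
    _ = (fromBlocks (-1) 0 0 R₀ : Matrix _ _ ℝ).det := by rw [hblock]
    _ = (-1 : Matrix {x // x ∈ S} {x // x ∈ S} ℝ).det * R₀.det := det_fromBlocks_zero₂₁ _ _ _
    _ = (-1 : ℝ) ^ S.card * R₀.det := by
        rw [show (-1 : Matrix {x // x ∈ S} {x // x ∈ S} ℝ) = -(1:Matrix _ _ ℝ) from rfl,
          det_neg, det_one, mul_one, Fintype.card_coe]
  have hsum_ext : ∀ (p q : {x : Fin C // x ∉ S}),
      ∑ c : {x : Fin C // x ∉ S}, R ↑c ↑p * R ↑c ↑q = ∑ c : Fin C, R c ↑p * R c ↑q := by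
    intro p q
    rw [← Finset.sum_subtype Sᶜ (fun x => Finset.mem_compl) (fun c => R c ↑p * R c ↑q)]
    refine Finset.sum_subset (Finset.subset_univ _) ?_
    intro c _ hc
    rw [Finset.notMem_compl] at hc
    rw [hRrow c ((hmem c).mp hc) ↑p, if_neg, zero_mul]
    intro h; exact p.2 (h ▸ hc)
  have hR₀tR₀ : R₀ᵀ * R₀ = 1 := by
    ext p q
    rw [Matrix.mul_apply]
    simp only [transpose_apply, submatrix_apply, R₀]
    rw [hsum_ext p q]
    have h1 := congrFun (congrFun hRtR ↑p) ↑q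
    rw [Matrix.mul_apply] at h1
    simp only [transpose_apply] at h1
    rw [h1]
    simp only [Matrix.one_apply, Subtype.coe_inj]
  have hR₀R₀t : R₀ * R₀ᵀ = 1 := mul_eq_one_comm.mp hR₀tR₀
  have hker : (1 + R₀).det ≠ 0 := by
    intro h
    obtain ⟨v, hv0, hv⟩ := (Matrix.exists_mulVec_eq_zero_iff).mpr h
    have hdot : v ⬝ᵥ ((1 + R₀) *ᵥ v) = 0 := by rw [hv, dotProduct_zero]
    rw [Matrix.add_mulVec, Matrix.one_mulVec, dotProduct_add] at hdot
    have hsplit : R₀ = diagonal (fun p : {x : Fin C // x ∉ S} => μ (cf p))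
        + K'.submatrix cf cf := by
      have h' : R₀ = (diagonal μ).submatrix cf cf + K'.submatrix cf cf := by
        rw [show R₀ = R.submatrix cf cf from rfl, hR]; rfl
      rw [h', submatrix_diagonal μ cf hcf]; rfl
    have hKskew : (K'.submatrix cf cf)ᵀ = -(K'.submatrix cf cf) := by
      rw [transpose_submatrix, hKt]
      rfl
    rw [hsplit, Matrix.add_mulVec, dotProduct_add, skew_dot _ hKskew, add_zero] at hdot
    have hd : v ⬝ᵥ (diagonal (fun p => μ (cf p)) *ᵥ v) = ∑ p, μ (cf p) * v p ^ 2 := by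
      simp only [dotProduct, mulVec_diagonal]
      exact Finset.sum_congr rfl fun p _ => by ring
    have hvv : v ⬝ᵥ v = ∑ p, v p ^ 2 := by
      simp only [dotProduct]
      exact Finset.sum_congr rfl fun p _ => by ring
    rw [hd, hvv] at hdot
    have hdot2 : ∑ p, (1 + μ (cf p)) * v p ^ 2 = 0 := by
      have hsplit2 : ∑ p, (1 + μ (cf p)) * v p ^ 2
          = ∑ p, v p ^ 2 + ∑ p, μ (cf p) * v p ^ 2 := by
        rw [← Finset.sum_add_distrib]
        exact Finset.sum_congr rfl fun p _ => by ring
      rw [hsplit2, hdot]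
    have hall : ∀ p, v p = 0 := by
      intro p
      have hnn : ∀ q ∈ Finset.univ, 0 ≤ (1 + μ (cf q)) * v q ^ 2 := fun q _ =>
        mul_nonneg (by linarith [hmu (cf q)]) (sq_nonneg _)
      have h0 := (Finset.sum_eq_zero_iff_of_nonneg hnn).mp hdot2 p (Finset.mem_univ p)
      have hpos : 0 < 1 + μ (cf p) := by
        rcases lt_or_eq_of_le (hmu (cf p)) with h' | h'
        · linarith
        · exact absurd ((hmem (cf p)).mpr h'.symm) p.2
      have := mul_eq_zero.mp h0
      rcases this with h' | h'
      · linarith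
      · exact pow_eq_zero_iff (by norm_num) |>.mp h'
    exact hv0 (funext hall)
  have hdetR₀ : R₀.det = 1 := by
    have h1 : (1 + R₀).det = R₀.det * (1 + R₀).det := by
      calc (1 + R₀).det = (R₀ * R₀ᵀ + R₀).det := by rw [hR₀R₀t]
      _ = (R₀ * (R₀ᵀ + 1)).det := by rw [mul_add, mul_one]
      _ = R₀.det * (R₀ᵀ + 1).det := by rw [det_mul]
      _ = R₀.det * (1 + R₀).det := by
          rw [show R₀ᵀ + 1 = (1 + R₀)ᵀ by rw [transpose_add, transpose_one, add_comm],
            det_transpose]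
    have h2 : R₀.det * (1 + R₀).det = 1 * (1 + R₀).det := by rw [← h1, one_mul]
    exact mul_right_cancel₀ hker h2
  rw [hdetR₀, mul_one] at hdet2
  exact (neg_one_pow_eq_one_iff_even (by norm_num)).mp hdet2.symm


section Main

set_option maxHeartbeats 1000000 in
/-- Every real special orthogonal `C × C` matrix is the exponential of a real
skew-symmetric matrix. -/
theorem special_orthogonal_eq_exp_skew (C : ℕ) (hC : 0 < C)
    (Q : Matrix (Fin C) (Fin C) ℝ) (hQ : Qᵀ * Q = 1) (hdet : Q.det = 1) :
    ∃ A : Matrix (Fin C) (Fin C) ℝ, Aᵀ = -A ∧ NormedSpace.exp A = Q := by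
  classical
  have hQQt : Q * Qᵀ = 1 := mul_eq_one_comm.mp hQ
  set M : Matrix (Fin C) (Fin C) ℝ := (2:ℝ)⁻¹ • (Q + Qᵀ) with hMdef
  set K : Matrix (Fin C) (Fin C) ℝ := (2:ℝ)⁻¹ • (Q - Qᵀ) with hKdef
  have hQMK : Q = M + K := by rw [hMdef, hKdef]; module
  have hMt : Mᵀ = M := by
    rw [hMdef, transpose_smul, transpose_add, transpose_transpose, add_comm]
  have hKt : Kᵀ = -K := by
    rw [hKdef, transpose_smul, transpose_sub, transpose_transpose]
    module
  have hM : M.IsHermitian := by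
    rw [Matrix.IsHermitian, conjTranspose_eq_transpose_of_trivial]
    exact hMt
  set μ : Fin C → ℝ := hM.eigenvalues with hμdef
  set P : Matrix (Fin C) (Fin C) ℝ := (hM.eigenvectorUnitary : Matrix (Fin C) (Fin C) ℝ)
    with hPdef
  have hPtP : Pᵀ * P = 1 := by
    rw [← conjTranspose_eq_transpose_of_trivial, ← star_eq_conjTranspose]
    exact Unitary.coe_star_mul_self hM.eigenvectorUnitary
  have hPPt : P * Pᵀ = 1 := mul_eq_one_comm.mp hPtP
  have hspec : Pᵀ * M * P = diagonal μ := by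
    have h := hM.conjStarAlgAut_star_eigenvectorUnitary
    rw [Unitary.conjStarAlgAut_apply, Unitary.coe_star, star_star] at h
    simp only [RCLike.ofReal_real_eq_id, Function.id_comp] at h
    rw [star_eq_conjTranspose, conjTranspose_eq_transpose_of_trivial] at h
    convert h using 2
  have hconj : ∀ X Y : Matrix (Fin C) (Fin C) ℝ,
      (Pᵀ*X*P) * (Pᵀ*Y*P) = Pᵀ*(X*Y)*P := by
    intro X Y
    have h1 : P * (Pᵀ * (Y * P)) = Y * P := by
      rw [← Matrix.mul_assoc P Pᵀ (Y*P), hPPt, one_mul]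
    calc (Pᵀ*X*P) * (Pᵀ*Y*P) = Pᵀ*(X*(P*(Pᵀ*(Y*P)))) := by simp only [Matrix.mul_assoc]
    _ = Pᵀ*(X*(Y*P)) := by rw [h1]
    _ = Pᵀ*(X*Y)*P := by simp only [Matrix.mul_assoc]
  set K' : Matrix (Fin C) (Fin C) ℝ := Pᵀ * K * P with hK'def
  set D : Matrix (Fin C) (Fin C) ℝ := diagonal μ with hDdef
  set R : Matrix (Fin C) (Fin C) ℝ := Pᵀ * Q * P with hRdef
  have hRDK : R = D + K' := by
    rw [hRdef, hQMK, Matrix.mul_add, Matrix.add_mul, hspec, hK'def, hDdef]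
  have hK'skew : K'ᵀ = -K' := by
    rw [hK'def]
    simp only [transpose_mul, transpose_transpose, hKt, Matrix.neg_mul, Matrix.mul_neg,
      Matrix.mul_assoc]
  have hcore : (Q+Qᵀ)*(Q-Qᵀ) = (Q-Qᵀ)*(Q+Qᵀ) := by
    have e1 : (Q+Qᵀ)*(Q-Qᵀ) = Q*Q + Qᵀ*Q - Q*Qᵀ - Qᵀ*Qᵀ := by noncomm_ring
    have e2 : (Q-Qᵀ)*(Q+Qᵀ) = Q*Q - Qᵀ*Q + Q*Qᵀ - Qᵀ*Qᵀ := by noncomm_ring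
    rw [e1, e2, hQ, hQQt]
    abel
  have hcommMK : M * K = K * M := by
    rw [hMdef, hKdef, smul_mul_smul_comm, smul_mul_smul_comm, hcore]
  have hMMKK : M * M - K * K = 1 := by
    have e1 : (Q+Qᵀ)*(Q+Qᵀ) - (Q-Qᵀ)*(Q-Qᵀ) = ((Q*Qᵀ + Q*Qᵀ) + (Qᵀ*Q + Qᵀ*Q)) := by
      noncomm_ring
    have e2 : M * M - K * K
        = ((2:ℝ)⁻¹ * (2:ℝ)⁻¹) • ((Q+Qᵀ)*(Q+Qᵀ) - (Q-Qᵀ)*(Q-Qᵀ)) := by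
      rw [hMdef, hKdef, smul_mul_smul_comm, smul_mul_smul_comm, smul_sub]
    rw [e2, e1, hQ, hQQt]
    have : ((1:Matrix (Fin C) (Fin C) ℝ) + 1) + (1 + 1) = (4:ℝ) • 1 := by module
    rw [this, smul_smul]
    norm_num
  have hDK' : D * K' = K' * D := by
    have h1 : (Pᵀ*M*P) * (Pᵀ*K*P) = (Pᵀ*K*P) * (Pᵀ*M*P) := by
      rw [hconj, hconj, hcommMK]
    rwa [hspec, ← hK'def] at h1
  have hK'2 : K' * K' = D * D - 1 := by
    have h1 : K' * K' = Pᵀ*(K*K)*P := hconj K K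
    have h2 : K * K = M * M - 1 := by rw [← hMMKK]; abel
    have h3 : Pᵀ*(M*M)*P = D * D := by rw [← hconj M M, hspec, hDdef]
    rw [h2, Matrix.mul_sub, Matrix.mul_one, Matrix.sub_mul, h3, hPtP] at h1
    exact h1
  -- entrywise facts
  have hK'symm : ∀ a b, K' b a = -K' a b := by
    intro a b
    have := congrFun (congrFun hK'skew a) b
    simpa [transpose_apply] using this
  have hK'e : ∀ a b, K' a b ≠ 0 → μ a = μ b := by
    intro a b hne
    have h := congrFun (congrFun hDK' a) b
    rw [hDdef] at h
    rw [diagonal_mul, mul_diagonal] at h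
    -- h : μ a * K' a b = K' a b * μ b
    have : (μ a - μ b) * K' a b = 0 := by linarith [h]
    rcases mul_eq_zero.mp this with h' | h'
    · linarith
    · exact absurd h' hne
  have hsumsq : ∀ a, ∑ b, (K' a b)^2 = 1 - μ a ^ 2 := by
    intro a
    have h := congrFun (congrFun hK'2 a) a
    rw [Matrix.mul_apply] at h
    rw [Matrix.sub_apply, hDdef, diagonal_mul_diagonal] at h
    rw [diagonal_apply_eq, Matrix.one_apply_eq] at h
    have h2 : ∑ c, K' a c * K' c a = -∑ c, (K' a c)^2 := by
      rw [← Finset.sum_neg_distrib]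
      exact Finset.sum_congr rfl fun c _ => by rw [hK'symm c a]; ring
    rw [h2] at h
    have : μ a * μ a = μ a ^ 2 := by ring
    linarith [h]
  have hmusq : ∀ i, μ i ^ 2 ≤ 1 := by
    intro i
    have h := hsumsq i
    have : 0 ≤ ∑ b, (K' i b)^2 := Finset.sum_nonneg fun b _ => sq_nonneg _
    linarith
  have hm1 : ∀ i, -1 ≤ μ i := fun i => by nlinarith [hmusq i]
  have hm2 : ∀ i, μ i ≤ 1 := fun i => by nlinarith [hmusq i]
  have hrowK : ∀ a, μ a ^ 2 = 1 → ∀ b, K' a b = 0 := by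
    intro a ha b
    have h := hsumsq a
    rw [ha, sub_self] at h
    have := (Finset.sum_eq_zero_iff_of_nonneg (fun c _ => sq_nonneg (K' a c))).mp h b
      (Finset.mem_univ b)
    exact pow_eq_zero_iff (two_ne_zero) |>.mp this
  -- orthogonality and det of R
  have hRt : Rᵀ = Pᵀ * Qᵀ * P := by
    rw [hRdef]
    simp only [transpose_mul, transpose_transpose, Matrix.mul_assoc]
  have hRtR : Rᵀ * R = 1 := by
    rw [hRt, hRdef, hconj, hQ, Matrix.mul_one, hPtP]
  have hdetR : R.det = 1 := by
    have h1 : R.det = Pᵀ.det * Q.det * P.det := by rw [hRdef, det_mul, det_mul]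
    have h2 : P.det * Pᵀ.det = 1 := by rw [← det_mul, hPPt, det_one]
    rw [h1, hdet, det_transpose, mul_one]
    rw [det_transpose] at h2
    exact h2
  -- the (-1)-eigenvalue set
  set S : Finset (Fin C) := Finset.univ.filter (fun i => μ i = -1) with hSdef
  have hmem : ∀ i, i ∈ S ↔ μ i = -1 := by intro i; simp [hSdef]
  have hEven : Even S.card :=
    even_card_neg_one R K' μ hRDK hK'skew hRtR hdetR hm1
      (fun a ha b => hrowK a (by rw [ha]; norm_num) b)
  obtain ⟨J, hJt, hJsupp, hJsq⟩ := exists_complex_structure S hEven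
  set θ : Fin C → ℝ := fun i => Real.arccos (μ i) with hθdef
  have hcosθ : ∀ i, Real.cos (θ i) = μ i := fun i => Real.cos_arccos (hm1 i) (hm2 i)
  have hsinθ0 : ∀ i, Real.sin (θ i) = 0 → μ i ^ 2 = 1 := by
    intro i h
    simp only [hθdef, Real.sin_arccos] at h
    have h2 := Real.sqrt_eq_zero'.mp h
    nlinarith [hmusq i]
  set c : Fin C → ℝ := fun i => if Real.sin (θ i) = 0 then 0 else θ i / Real.sin (θ i)
    with hcdef
  have hθeq : ∀ a b, μ a = μ b → θ a = θ b := by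
    intro a b h; simp only [hθdef, h]
  have hceq : ∀ a b, μ a = μ b → c a = c b := by
    intro a b h; simp only [hcdef, hθeq a b h]
  have hcK : diagonal c * K' = K' * diagonal c := by
    ext a b
    rw [diagonal_mul, mul_diagonal]
    by_cases hne : K' a b = 0
    · rw [hne]; ring
    · rw [hceq a b (hK'e a b hne)]; ring
  have hKJ : K' * J = 0 := by
    ext a b
    rw [Matrix.mul_apply, Matrix.zero_apply]
    apply Finset.sum_eq_zero
    intro x _
    by_cases hx : x ∈ S
    · have h0 : K' a x = 0 := by
        rw [hK'symm x a, hrowK x (by rw [(hmem x).mp hx]; norm_num) a, neg_zero]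
      rw [h0, zero_mul]
    · rw [hJsupp x b (Or.inl hx), mul_zero]
  have hJK : J * K' = 0 := by
    ext a b
    rw [Matrix.mul_apply, Matrix.zero_apply]
    apply Finset.sum_eq_zero
    intro x _
    by_cases hx : x ∈ S
    · rw [hrowK x (by rw [(hmem x).mp hx]; norm_num) b, mul_zero]
    · rw [hJsupp a x (Or.inr hx), zero_mul]
  set B : Matrix (Fin C) (Fin C) ℝ := diagonal c * K' + Real.pi • J with hBdef
  have hB2 : B * B = -(diagonal fun i => θ i ^ 2) := by
    have t1 : (diagonal c * K') * (Real.pi • J) = 0 := by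
      rw [mul_smul_comm, Matrix.mul_assoc, hKJ, Matrix.mul_zero, smul_zero]
    have t2 : (Real.pi • J) * (diagonal c * K') = 0 := by
      rw [smul_mul_assoc, hcK, ← Matrix.mul_assoc, hJK, Matrix.zero_mul, smul_zero]
    have t3 : (Real.pi • J) * (Real.pi • J) = (Real.pi * Real.pi) • (J * J) :=
      smul_mul_smul_comm _ _ _ _
    have hexpand : B * B = (diagonal c * K') * (diagonal c * K')
        + (Real.pi * Real.pi) • (J * J) := by
      rw [hBdef, Matrix.add_mul, Matrix.mul_add, Matrix.mul_add, t1, t2, t3]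
      abel
    have hdcdc : (diagonal c * K') * (diagonal c * K')
        = (diagonal c * diagonal c) * (K' * K') := by
      calc (diagonal c * K') * (diagonal c * K')
          = diagonal c * ((K' * diagonal c) * K') := by simp only [Matrix.mul_assoc]
      _ = diagonal c * ((diagonal c * K') * K') := by rw [hcK]
      _ = (diagonal c * diagonal c) * (K' * K') := by simp only [Matrix.mul_assoc]
    have key : ∀ i, c i * c i * (μ i * μ i - 1)
        - Real.pi * Real.pi * (if i ∈ S then (1:ℝ) else 0) = -(θ i ^ 2) := by
      intro i
      by_cases hiS : i ∈ S
      · have hμi : μ i = -1 := (hmem i).mp hiS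
        have hθi : θ i = Real.pi := by simp only [hθdef, hμi, Real.arccos_neg_one]
        have hci : c i = 0 := by
          simp only [hcdef, hθi, Real.sin_pi]
          simp
        rw [hci, hθi, if_pos hiS]; ring
      · rw [if_neg hiS]
        by_cases hsin : Real.sin (θ i) = 0
        · have hsq := hsinθ0 i hsin
          have hμi : μ i = 1 := by
            have hne : μ i ≠ -1 := fun h => hiS ((hmem i).mpr h)
            have hfac : (μ i - 1) * (μ i + 1) = 0 := by nlinarith [hsq]
            rcases mul_eq_zero.mp hfac with h' | h'
            · linarith
            · exact absurd (by linarith) hne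
          have hθi : θ i = 0 := by simp only [hθdef, hμi, Real.arccos_one]
          have hci : c i = 0 := by simp only [hcdef, if_pos hsin]
          rw [hci, hθi, hμi]; ring
        · have hci : c i = θ i / Real.sin (θ i) := by simp only [hcdef, if_neg hsin]
          have hss : Real.sin (θ i) * Real.sin (θ i) = 1 - μ i * μ i := by
            have h2 : Real.sin (θ i) ^ 2 = 1 - μ i ^ 2 := by
              simp only [hθdef, Real.sin_arccos]
              rw [Real.sq_sqrt (by nlinarith [hmusq i])]
            nlinarith [h2]
          rw [hci]
          field_simp
          nlinarith [hss]
    rw [hexpand, hdcdc, hK'2, hJsq, hDdef, diagonal_mul_diagonal, diagonal_mul_diagonal,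
      Matrix.mul_sub, Matrix.mul_one, diagonal_mul_diagonal]
    ext a b
    rcases eq_or_ne a b with rfl | hab
    · simp only [Matrix.add_apply, Matrix.sub_apply, Matrix.smul_apply, Matrix.neg_apply,
        diagonal_apply_eq, Pi.mul_apply, smul_eq_mul]
      have k := key a
      ring_nf at k ⊢
      linarith
    · simp only [Matrix.add_apply, Matrix.sub_apply, Matrix.smul_apply, Matrix.neg_apply,
        diagonal_apply_ne _ hab, Pi.mul_apply, smul_eq_mul]
      ring
  have hexpB := exp_of_sq B θ hB2
  have hEB : diagonal (fun i => Real.cos (θ i)) + diagonal (fun i => sincc (θ i)) * B = R := by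
    rw [hRDK]
    have h1 : diagonal (fun i => Real.cos (θ i)) = D := by
      rw [hDdef]
      exact congrArg Matrix.diagonal (funext fun i => hcosθ i)
    have hsJ : diagonal (fun i => sincc (θ i)) * J = 0 := by
      ext a b
      rw [diagonal_mul, Matrix.zero_apply]
      by_cases ha : a ∈ S
      · have hθa : θ a = Real.pi := by simp only [hθdef, (hmem a).mp ha, Real.arccos_neg_one]
        have hz : sincc (θ a) = 0 := by
          rw [hθa]; unfold sincc; rw [if_neg Real.pi_ne_zero, Real.sin_pi, zero_div]
        rw [hz, zero_mul]
      · rw [hJsupp a b (Or.inl ha), mul_zero]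
    have hsK : diagonal (fun i => sincc (θ i)) * (diagonal c * K') = K' := by
      rw [← Matrix.mul_assoc, diagonal_mul_diagonal]
      ext a b
      rw [diagonal_mul]
      by_cases hne : K' a b = 0
      · rw [hne, mul_zero]
      · have hsq : μ a ^ 2 ≠ 1 := fun h => hne (hrowK a h b)
        have hsin : Real.sin (θ a) ≠ 0 := fun h => hsq (hsinθ0 a h)
        have hθ0 : θ a ≠ 0 := by
          intro h
          apply hsq
          have h2 := hcosθ a
          rw [h, Real.cos_zero] at h2
          rw [← h2]; norm_num
        have hca : c a = θ a / Real.sin (θ a) := by simp only [hcdef, if_neg hsin]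
        have hsc : sincc (θ a) = Real.sin (θ a) / θ a := by unfold sincc; rw [if_neg hθ0]
        rw [hca, hsc]
        field_simp
    calc diagonal (fun i => Real.cos (θ i)) + diagonal (fun i => sincc (θ i)) * B
        = D + (diagonal (fun i => sincc (θ i)) * (diagonal c * K')
            + Real.pi • (diagonal (fun i => sincc (θ i)) * J)) := by
          rw [h1, hBdef, Matrix.mul_add, mul_smul_comm]
    _ = D + K' := by rw [hsK, hsJ, smul_zero, add_zero]
  have hBskew : Bᵀ = -B := by
    have h2 : (diagonal c * K')ᵀ = -(diagonal c * K') := by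
      rw [transpose_mul, diagonal_transpose, hK'skew, Matrix.neg_mul, ← hcK]
    rw [hBdef, transpose_add, h2, transpose_smul, hJt, smul_neg]
    abel
  refine ⟨P * B * Pᵀ, ?_, ?_⟩
  · simp only [transpose_mul, transpose_transpose, hBskew, Matrix.mul_neg, Matrix.neg_mul,
      Matrix.mul_assoc]
  · have hU := Matrix.exp_units_conj
      (⟨P, Pᵀ, hPPt, hPtP⟩ : (Matrix (Fin C) (Fin C) ℝ)ˣ) B
    have hfin : P * R * Pᵀ = Q := by
      rw [hRdef]
      calc P * (Pᵀ*Q*P) * Pᵀ = P*(Pᵀ*(Q*(P*Pᵀ))) := by simp only [Matrix.mul_assoc]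
      _ = P*(Pᵀ*Q) := by rw [hPPt, Matrix.mul_one]
      _ = P*Pᵀ*Q := by rw [Matrix.mul_assoc]
      _ = Q := by rw [hPPt, one_mul]
    calc NormedSpace.exp (P * B * Pᵀ) = P * NormedSpace.exp B * Pᵀ := hU
    _ = P * R * Pᵀ := by rw [hexpB, hEB]
    _ = Q := hfin

end Main
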